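/- Let s ≥ 1, ω0, ω1 ∈ ℝ, let b_0, …, b_s ∈ ℝ be nonzero, set a_j = 1 − b_j T_j(ω0), and define the RKC coefficients μ_j, ν_j, κ_j, γ_j. Define c_0 = 0, c_1 = μ_1, and c_j = ν_j c_{j−1} + κ_j c_{j−2} + μ_j + γ_j for 2 ≤ j ≤ s. Then c_k = b_k ω1 k U_{k−1}(ω0) for every 1 ≤ k ≤ s. -/

import Mathlib

noncomputable section

/-- Chebyshev polynomial of the first kind, evaluated in an arbitrary ring. -/
def chebT (R : Type*) [Ring R] : ℕ → R → R
  | 0, _ => 1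
  | 1, x => x
  | n + 2, x => 2 * x * chebT R (n + 1) x - chebT R n x

/-- Chebyshev polynomial of the second kind, evaluated in an arbitrary ring. -/
def chebU (R : Type*) [Ring R] : ℕ → R → R
  | 0, _ => 1
  | 1, x => 2 * x
  | n + 2, x => 2 * x * chebU R (n + 1) x - chebU R n x

/-- Spectral norm of a real matrix: operator norm induced by the Euclidean norms. -/
def specNorm {m n : ℕ} (A : Matrix (Fin m) (Fin n) ℝ) : ℝ :=
  ‖(Matrix.toEuclideanLin A).toContinuousLinearMap‖



lemma chebU_eq_two_chebT_add (x : ℝ) : ∀ n, chebU ℝ (n+2) x = 2 * chebT ℝ (n+2) x + chebU ℝ n x := by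
  intro n
  induction n using Nat.strong_induction_on with
  | _ n ih =>
    match n with
    | 0 => simp [chebU, chebT]; ring
    | 1 => simp [chebU, chebT]; ring
    | (p+2) =>
      have h1 := ih (p+1) (by omega)
      have h2 := ih p (by omega)
      have e1 : chebU ℝ (p+4) x = 2*x*chebU ℝ (p+3) x - chebU ℝ (p+2) x := rfl
      have e2 : chebT ℝ (p+4) x = 2*x*chebT ℝ (p+3) x - chebT ℝ (p+2) x := rfl
      have edef : chebU ℝ (p+2) x = 2*x*chebU ℝ (p+1) x - chebU ℝ p x := rfl
      show chebU ℝ (p+4) x = 2 * chebT ℝ (p+4) x + chebU ℝ (p+2) x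
      rw [e1, e2, h1]
      linear_combination (-1 : ℝ) * h2 - edef

/-- the RKC abscissae `c_k` defined by the three-term recursion satisfy
`c_k = b_k ω1 k U_{k−1}(ω0)`. -/
theorem rkc_abscissae_formula
    (s : ℕ) (hs : 1 ≤ s) (ω0 ω1 : ℝ) (b : ℕ → ℝ) (hb : ∀ j, j ≤ s → b j ≠ 0)
    (μ ν κ γ c : ℕ → ℝ)
    (hμ1 : μ 1 = b 1 * ω1)
    (hμ : ∀ j, 2 ≤ j → j ≤ s → μ j = 2 * ω1 * b j / b (j - 1))
    (hν : ∀ j, 2 ≤ j → j ≤ s → ν j = 2 * ω0 * b j / b (j - 1))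
    (hκ : ∀ j, 2 ≤ j → j ≤ s → κ j = -(b j / b (j - 2)))
    (hγ : ∀ j, 2 ≤ j → j ≤ s → γ j = -(μ j * (1 - b (j - 1) * chebT ℝ (j - 1) ω0)))
    (hc0 : c 0 = 0) (hc1 : c 1 = μ 1)
    (hc : ∀ j, 2 ≤ j → j ≤ s → c j = ν j * c (j - 1) + κ j * c (j - 2) + μ j + γ j) :
    ∀ k, 1 ≤ k → k ≤ s → c k = b k * ω1 * k * chebU ℝ (k - 1) ω0 := by
  intro k
  induction k using Nat.strong_induction_on with
  | _ k ih =>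
    intro hk1 hks
    match k with
    | 1 =>
      simp [hc1, hμ1, chebU]
    | (m+2) =>
      have h2 : 2 ≤ m+2 := by omega
      have hcm := hc (m+2) h2 hks
      rw [hν (m+2) h2 hks, hκ (m+2) h2 hks, hγ (m+2) h2 hks, hμ (m+2) h2 hks] at hcm
      simp only [show m+2-1 = m+1 from rfl, show m+2-2 = m from rfl] at hcm
      have hbm1 : b (m+1) ≠ 0 := hb (m+1) (by omega)
      have hbm : b m ≠ 0 := hb m (by omega)
      have hc1' : c (m+1) = b (m+1) * ω1 * (m+1 : ℕ) * chebU ℝ (m+1-1) ω0 := by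
        exact ih (m+1) (by omega) (by omega) (by omega)
      match m with
      | 0 =>
        rw [hcm, hc0, hc1']
        simp only [chebU, chebT]
        push_cast
        field_simp
        simp only [show chebU ℝ 0 ω0 = 1 from rfl, show chebU ℝ 1 ω0 = 2 * ω0 from rfl]
        ring
      | (p+1) =>
        have hc2' : c (p+1) = b (p+1) * ω1 * (p+1 : ℕ) * chebU ℝ (p+1-1) ω0 :=
          ih (p+1) (by omega) (by omega) (by omega)
        simp only [show p+1-1 = p from rfl, show p+2-1 = p+1 from rfl, show p+3-1 = p+2 from rfl] at *
        rw [hcm, hc1', hc2']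
        have hU : chebU ℝ (p+2) ω0 = 2*ω0*chebU ℝ (p+1) ω0 - chebU ℝ p ω0 := rfl
        have hT := chebU_eq_two_chebT_add ω0 p
        have hT2 : chebT ℝ (p+1+1) ω0 = ω0 * chebU ℝ (p+1) ω0 - chebU ℝ p ω0 := by
          have : chebT ℝ (p+1+1) ω0 = chebT ℝ (p+2) ω0 := by norm_num
          rw [this]; linarith
        rw [show ((p:ℕ)+1+2 : ℕ) = p+3 from rfl] at *
        rw [show chebU ℝ (p+2) ω0 = 2*ω0*chebU ℝ (p+1) ω0 - chebU ℝ p ω0 from hU, hT2]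
        push_cast
        field_simp
        ring
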